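/- For both OneMinMax and LOTZ, if the reference point (r₁, r₂) satisfies r₁ ≤ −1 and r₂ ≤ −1, then the hypervolume contribution HVC(·, P) is diversity-favouring on {0,1}ⁿ \ {0ⁿ, 1ⁿ}: for every population P of mutually non-dominated points and all Pareto-optimal x, y ∈ P with x, y ∉ {0ⁿ, 1ⁿ}, if x is bad then HVC(x, P) = 1, and if y is good then HVC(y, P) > 1; in particular HVC(x, P) < HVC(y, P). -/

import Mathlib

noncomputable section
open scoped ENNReal
attribute [local instance] Classical.propDecidable

namespace EMO


/-- A bit string of length `n`. -/
abbrev BitString (n : ℕ) := Fin n → Bool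

/-- Number of one-bits. -/
def onesCount {n : ℕ} (x : BitString n) : ℕ :=
  (Finset.univ.filter fun i => x i = true).card

def allOnes (n : ℕ) : BitString n := fun _ => true
def allZeros (n : ℕ) : BitString n := fun _ => false

/-- The bi-objective function OneMinMax. -/
def OneMinMax {n : ℕ} (x : BitString n) : ℤ × ℤ :=
  ((onesCount x : ℤ), (n : ℤ) - (onesCount x : ℤ))

/-- Number of leading ones. -/
def leadingOnes {n : ℕ} (x : BitString n) : ℕ :=
  (Finset.univ.filter fun i : Fin n => ∀ j : Fin n, j ≤ i → x j = true).card

/-- Number of trailing zeros. -/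
def trailingZeros {n : ℕ} (x : BitString n) : ℕ :=
  (Finset.univ.filter fun i : Fin n => ∀ j : Fin n, i ≤ j → x j = false).card

/-- The bi-objective function LOTZ. -/
def LOTZ {n : ℕ} (x : BitString n) : ℤ × ℤ :=
  ((leadingOnes x : ℤ), (trailingZeros x : ℤ))

/-- `y` dominates `x` (maximisation). -/
def dominates {n : ℕ} (f : BitString n → ℤ × ℤ) (y x : BitString n) : Prop :=
  (f x).1 ≤ (f y).1 ∧ (f x).2 ≤ (f y).2 ∧ f x ≠ f y

/-- `y` weakly dominates `x` (maximisation). -/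
def weaklyDominates {n : ℕ} (f : BitString n → ℤ × ℤ) (y x : BitString n) : Prop :=
  (f x).1 ≤ (f y).1 ∧ (f x).2 ≤ (f y).2

/-- Pareto optimality. -/
def paretoOptimal {n : ℕ} (f : BitString n → ℤ × ℤ) (x : BitString n) : Prop :=
  ¬ ∃ y : BitString n, dominates f y x

/-- A population of mutually non-dominated points. -/
def mutuallyNonDominated {n : ℕ} (f : BitString n → ℤ × ℤ)
    (P : Finset (BitString n)) : Prop :=
  ∀ x ∈ P, ∀ y ∈ P, ¬ dominates f y x

/-- Flip bit `i` of `x`. -/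
def flipBit {n : ℕ} (x : BitString n) (i : Fin n) : BitString n :=
  Function.update x i (!x i)

/-- `y` is a Hamming neighbour of `x`. -/
def hammingNeighbour {n : ℕ} (x y : BitString n) : Prop :=
  ∃ i : Fin n, y = flipBit x i

/-- `x` is good relative to population `P`: it is Pareto optimal and has a Pareto-optimal
Hamming neighbour whose objective vector is not attained by any member of `P`. -/
def isGood {n : ℕ} (f : BitString n → ℤ × ℤ) (P : Finset (BitString n))
    (x : BitString n) : Prop :=
  paretoOptimal f x ∧
    ∃ y : BitString n, hammingNeighbour x y ∧ paretoOptimal f y ∧ ∀ z ∈ P, f z ≠ f y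

/-- `x` is bad relative to population `P`. -/
def isBad {n : ℕ} (f : BitString n → ℤ × ℤ) (P : Finset (BitString n))
    (x : BitString n) : Prop :=
  paretoOptimal f x ∧
    ¬ ∃ y : BitString n, hammingNeighbour x y ∧ paretoOptimal f y ∧ ∀ z ∈ P, f z ≠ f y

/-- `P` covers the whole Pareto front of `f`. -/
def coversFront {n : ℕ} (f : BitString n → ℤ × ℤ) (P : Finset (BitString n)) : Prop :=
  ∀ x : BitString n, paretoOptimal f x → ∃ z ∈ P, f z = f x

/-- The hypervolume contribution of `x` to `P` (for a population of mutually
non-dominated points, with reference point `r`). -/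
def HVC {n : ℕ} (f : BitString n → ℤ × ℤ) (r : ℤ × ℤ) (x : BitString n)
    (P : Finset (BitString n)) : ℤ :=
  ((f x).1 - (WithBot.unbotD r.1 ((P.filter fun z => (f z).1 < (f x).1).image fun z => (f z).1).max)) *
  ((f x).2 - (WithBot.unbotD r.2 ((P.filter fun z => (f z).2 < (f x).2).image fun z => (f z).2).max))

/-- Crowding distance of `x` in `P` with respect to a single objective `g`: infinite for the
boundary points, and otherwise the normalised difference between successor and predecessor. -/
def CDCobj {n : ℕ} (g : BitString n → ℤ) (x : BitString n)
    (P : Finset (BitString n)) : ℝ≥0∞ :=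
  if (∀ z ∈ P, g x ≤ g z) ∨ (∀ z ∈ P, g z ≤ g x) then ⊤
  else
    (((WithTop.untopD 0 ((P.filter fun z => g x < g z).image g).min -
        (WithBot.unbotD 0 ((P.filter fun z => g z < g x).image g).max)).toNat : ℝ≥0∞)) /
      (((WithBot.unbotD 0 (P.image g).max - (WithTop.untopD 0 (P.image g).min)).toNat : ℝ≥0∞))

/-- The crowding distance contribution of `x` to `P`. -/
def CDC {n : ℕ} (f : BitString n → ℤ × ℤ) (x : BitString n)
    (P : Finset (BitString n)) : ℝ≥0∞ :=
  CDCobj (fun z => (f z).1) x P + CDCobj (fun z => (f z).2) x P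

/-- A diversity measure `c` is diversity-favouring on `S`. -/
def diversityFavouring {n : ℕ} {α : Type*} [Preorder α] (f : BitString n → ℤ × ℤ)
    (c : BitString n → Finset (BitString n) → α) (S : Set (BitString n)) : Prop :=
  ∀ P : Finset (BitString n), mutuallyNonDominated f P →
    ∀ x ∈ P, ∀ y ∈ P, x ∈ S → y ∈ S → isBad f P x → isGood f P y → c x P < c y P

/-- The default bit string (used only to make selection kernels total). -/
def defaultBS (n : ℕ) : BitString n := fun _ => false

/-- Local mutation: flip a single uniformly random bit. -/
def localMutation {n : ℕ} (hn : 0 < n) (x : BitString n) : PMF (BitString n) :=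
  haveI : Nonempty (Fin n) := ⟨⟨0, hn⟩⟩
  (PMF.uniformOfFintype (Fin n)).map (flipBit x)

/-- A Bernoulli coin with success probability `1/n` (for `n ≥ 1`). -/
def bitFlipCoin (n : ℕ) : PMF Bool :=
  PMF.bernoulli (min ((n : ℝ≥0∞))⁻¹ 1).toNNReal
    (by simpa using ENNReal.toNNReal_mono ENNReal.one_ne_top (min_le_right ((n : ℝ≥0∞)⁻¹) 1))

/-- Global (standard bit) mutation: flip each bit independently with probability `1/n`. -/
def globalMutationAux {n : ℕ} : List (Fin n) → BitString n → PMF (BitString n)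
  | [], x => PMF.pure x
  | i :: is, x => (bitFlipCoin n).bind fun b =>
      globalMutationAux is (if b then flipBit x i else x)

def globalMutation {n : ℕ} (x : BitString n) : PMF (BitString n) :=
  globalMutationAux (List.finRange n) x

/-- Survival selection: if `s'` is not dominated by any member of `P`, add `s'` to `P` and
remove all members weakly dominated by `s'`. -/
def updatePop {n : ℕ} (f : BitString n → ℤ × ℤ) (P : Finset (BitString n))
    (s' : BitString n) : Finset (BitString n) :=
  if ∃ z ∈ P, dominates f z s' then P
  else insert s' (P.filter fun z => ¬ weaklyDominates f s' z)

/-- One iteration of (G)SEMO with parent-selection kernel `select` and mutation `mutate`. -/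
def step {n : ℕ} (f : BitString n → ℤ × ℤ)
    (select : Finset (BitString n) → PMF (BitString n))
    (mutate : BitString n → PMF (BitString n))
    (P : Finset (BitString n)) : PMF (Finset (BitString n)) :=
  (select P).bind fun s => (mutate s).map fun s' => updatePop f P s'

/-- The L-dominant attribute `L(x) = LO(x) + TZ(x)`. -/
def Ldom {n : ℕ} (x : BitString n) : ℕ := leadingOnes x + trailingZeros x

/-- The subpopulation of points with maximum L-dominant attribute. -/
def maxLSub {n : ℕ} (P : Finset (BitString n)) : Finset (BitString n) :=
  P.filter fun x => ∀ z ∈ P, Ldom z ≤ Ldom x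

/-- One iteration of the modified GSEMO: parent selection (and the diversity contribution)
is restricted to the subpopulation of points with maximum L-dominant attribute. -/
def stepMod {n : ℕ} (f : BitString n → ℤ × ℤ)
    (select : Finset (BitString n) → PMF (BitString n))
    (mutate : BitString n → PMF (BitString n))
    (P : Finset (BitString n)) : PMF (Finset (BitString n)) :=
  (select (maxLSub P)).bind fun s => (mutate s).map fun s' => updatePop f P s'

/-- Initial population: a single uniformly random bit string. -/
def initDist (n : ℕ) : PMF (Finset (BitString n)) :=
  (PMF.uniformOfFintype (BitString n)).map fun x => {x}

/-- Distribution of the population after `t` iterations. -/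
def stateDist {S : Type*} (init : PMF S) (st : S → PMF S) : ℕ → PMF S
  | 0 => init
  | t + 1 => (stateDist init st t).bind st

/-- Expected number of iterations until an (absorbing) goal predicate is reached,
expressed as `∑ₜ Pr[goal not yet reached at time t]`. -/
def expectedRuntime {S : Type*} (init : PMF S) (st : S → PMF S) (goal : S → Prop) : ℝ≥0∞ :=
  ∑' t : ℕ, (stateDist init st t).toOuterMeasure {s | ¬ goal s}

/-- Uniform parent selection. -/
def uniformSelect {n : ℕ} (P : Finset (BitString n)) : PMF (BitString n) :=
  if h : P.Nonempty then PMF.uniformOfFinset P h else PMF.pure (defaultBS n)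

/-- Highest Diversity Contribution (HDC) parent selection: select an individual with
maximum diversity contribution, ties broken uniformly at random. -/
def HDCSelect {n : ℕ} {α : Type*} [LinearOrder α]
    (c : BitString n → Finset (BitString n) → α)
    (P : Finset (BitString n)) : PMF (BitString n) :=
  if h : P.Nonempty then
    PMF.uniformOfFinset (P.filter fun x => ∀ y ∈ P, c y P ≤ c x P)
      (by
        obtain ⟨b, hb, hmax⟩ := P.exists_max_image (fun x => c x P) h
        exact ⟨b, Finset.mem_filter.mpr ⟨hb, hmax⟩⟩)
  else PMF.pure (defaultBS n)

/-- Non-Minimum Uniform at Random (NMUAR) parent selection: select uniformly at random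
among all individuals whose diversity contribution is not minimal (from the whole
population if all contributions are equal). -/
def NMUARSelect {n : ℕ} {α : Type*} [LinearOrder α]
    (c : BitString n → Finset (BitString n) → α)
    (P : Finset (BitString n)) : PMF (BitString n) :=
  if h : P.Nonempty then
    if hQ : (P.filter fun x => ∃ y ∈ P, c y P < c x P).Nonempty then
      PMF.uniformOfFinset _ hQ
    else PMF.uniformOfFinset P h
  else PMF.pure (defaultBS n)

/-- Tournament selection with tournament size `μ = |P|`: draw `μ` individuals uniformly at
random with replacement from `P` and select one with the highest diversity contribution
among the drawn multiset (ties broken uniformly at random). -/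
def tournamentSelect {n : ℕ} {α : Type*} [LinearOrder α]
    (c : BitString n → Finset (BitString n) → α)
    (P : Finset (BitString n)) : PMF (BitString n) :=
  if h : P.Nonempty then
    haveI : Nonempty {x // x ∈ P} := h.to_subtype
    (PMF.uniformOfFintype (Fin P.card → {x // x ∈ P})).bind fun g =>
      PMF.uniformOfFinset
        ((Finset.univ.image fun i => ((g i : {x // x ∈ P}) : BitString n)).filter fun x =>
          ∀ y ∈ Finset.univ.image fun i => ((g i : {x // x ∈ P}) : BitString n), c y P ≤ c x P)
        (by
          have hne : (Finset.univ.image fun i => ((g i : {x // x ∈ P}) : BitString n)).Nonempty := by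
            refine ⟨(g ⟨0, Finset.card_pos.mpr h⟩ : {x // x ∈ P}), ?_⟩
            exact Finset.mem_image.mpr ⟨⟨0, Finset.card_pos.mpr h⟩, Finset.mem_univ _, rfl⟩
          obtain ⟨b, hb, hmax⟩ :=
            Finset.exists_max_image _ (fun x => c x P) hne
          exact ⟨b, Finset.mem_filter.mpr ⟨hb, hmax⟩⟩)
  else PMF.pure (defaultBS n)

/-- Exponential ranking scheme: probability of selecting the `i`-th ranked individual
(1-indexed) in a population of size `μ`. -/
def rExp (i μ : ℕ) : ℝ≥0∞ :=
  (2 : ℝ≥0∞)⁻¹ ^ i / ∑ j ∈ Finset.Icc 1 μ, (2 : ℝ≥0∞)⁻¹ ^ j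

/-- Power-law ranking scheme. -/
def rPow (i μ : ℕ) : ℝ≥0∞ :=
  ((i : ℝ≥0∞) ^ 2)⁻¹ / ∑ j ∈ Finset.Icc 1 μ, ((j : ℝ≥0∞) ^ 2)⁻¹

/-- Harmonic ranking scheme. -/
def rHarm (i μ : ℕ) : ℝ≥0∞ :=
  (i : ℝ≥0∞)⁻¹ / ∑ j ∈ Finset.Icc 1 μ, (j : ℝ≥0∞)⁻¹


/-- `select` implements a rank-based parent-selection scheme with rank probabilities
`r i μ` (1-indexed rank `i`, population size `μ`) with respect to the diversity
contribution `c`, for some non-increasing ordering of the population by `c`. -/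
def implementsRankScheme {n : ℕ} {α : Type*} [Preorder α]
    (c : BitString n → Finset (BitString n) → α) (r : ℕ → ℕ → ℝ≥0∞)
    (select : Finset (BitString n) → PMF (BitString n)) : Prop :=
  ∀ P : Finset (BitString n), P.Nonempty →
    ∃ l : List (BitString n), l.Nodup ∧ l.toFinset = P ∧
      l.Chain' (fun a b => c b P ≤ c a P) ∧
      (∀ i : Fin l.length, select P (l.get i) = r (i.val + 1) P.card) ∧
      (∀ x : BitString n, x ∉ P → select P x = 0)

/-- The Pareto-optimal point `1^i 0^(n-i)` of LOTZ. -/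
def opt (n i : ℕ) : BitString n := fun t => decide ((t : ℕ) < i)

/-- The whole Pareto set of LOTZ as a population. -/
def frontSet (n : ℕ) : Finset (BitString n) := (Finset.range (n + 1)).image (opt n)

/-- `P` has a gap at position `i`. -/
def hasGapAt {n : ℕ} (P : Finset (BitString n)) (i : ℕ) : Prop :=
  opt n i ∉ P ∧ (∃ j, j < i ∧ opt n j ∈ P) ∧ (∃ k, i < k ∧ k ≤ n ∧ opt n k ∈ P)

/-- `P` has a gap at some position `i` with `n/4 ≤ i ≤ 3n/4`. -/
def gapInRange (n : ℕ) (P : Finset (BitString n)) : Prop :=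
  ∃ i : ℕ, n ≤ 4 * i ∧ 4 * i ≤ 3 * n ∧ hasGapAt P i

/-- `P` contains both `0^n` and `1^n`. -/
def bothExtremes (n : ℕ) (P : Finset (BitString n)) : Prop :=
  allZeros n ∈ P ∧ allOnes n ∈ P

/-- The chain stopped (frozen) as soon as `cond` holds. -/
def stopWhen {S : Type*} (cond : S → Prop) (st : S → PMF S) (s : S) : PMF S :=
  if cond s then PMF.pure s else st s


lemma card_filter_val_lt (n k : ℕ) (h : k ≤ n) :
    ((Finset.univ : Finset (Fin n)).filter fun i => i.val < k).card = k := by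
  have : ((Finset.univ : Finset (Fin n)).filter fun i => i.val < k)
      = (Finset.range k).attachFin (fun m hm => lt_of_lt_of_le (Finset.mem_range.mp hm) h) := by
    ext i; simp [Finset.mem_attachFin]
  rw [this, Finset.card_attachFin, Finset.card_range]

lemma card_filter_le_val (n k : ℕ) (h : k ≤ n) :
    ((Finset.univ : Finset (Fin n)).filter fun i => k ≤ i.val).card = n - k := by
  have h2 := card_filter_val_lt n k h
  have h3 := Finset.card_filter_add_card_filter_not (s := (Finset.univ : Finset (Fin n)))
    (p := fun i => i.val < k)
  simp only [not_lt, Finset.card_univ, Fintype.card_fin] at h3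
  omega

lemma onesCount_le {n : ℕ} (x : BitString n) : onesCount x ≤ n := by
  calc onesCount x ≤ (Finset.univ : Finset (Fin n)).card := Finset.card_filter_le _ _
  _ = n := by simp

lemma onesCount_flip {n : ℕ} (x : BitString n) (j : Fin n) :
    (onesCount (flipBit x j) : ℤ) = if x j = true then (onesCount x : ℤ) - 1 else onesCount x + 1 := by
  unfold onesCount flipBit
  by_cases h : x j = true
  · have : (Finset.univ.filter fun i => Function.update x j (!x j) i = true)
        = (Finset.univ.filter fun i => x i = true).erase j := by
      ext i
      by_cases hij : i = j <;> simp [Function.update_apply, hij, h]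
    rw [this, Finset.card_erase_of_mem (by simp [h])]
    have : 0 < (Finset.univ.filter fun i => x i = true).card :=
      Finset.card_pos.mpr ⟨j, by simp [h]⟩
    simp [h]; omega
  · have hx : x j = false := by simpa using h
    have : (Finset.univ.filter fun i => Function.update x j (!x j) i = true)
        = insert j (Finset.univ.filter fun i => x i = true) := by
      ext i
      by_cases hij : i = j <;> simp [Function.update_apply, hij, hx]
    rw [this, Finset.card_insert_of_notMem (by simp [hx])]
    simp [hx]

lemma lo_add_tz_le {n : ℕ} (x : BitString n) : leadingOnes x + trailingZeros x ≤ n := by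
  unfold leadingOnes trailingZeros
  have hdisj : Disjoint (Finset.univ.filter fun i : Fin n => ∀ j : Fin n, j ≤ i → x j = true)
      (Finset.univ.filter fun i : Fin n => ∀ j : Fin n, i ≤ j → x j = false) := by
    rw [Finset.disjoint_left]
    intro i hi hi'
    have h1 := (Finset.mem_filter.mp hi).2 i le_rfl
    have h2 := (Finset.mem_filter.mp hi').2 i le_rfl
    simp [h1] at h2
  calc _ = ((Finset.univ.filter fun i : Fin n => ∀ j : Fin n, j ≤ i → x j = true)
        ∪ (Finset.univ.filter fun i : Fin n => ∀ j : Fin n, i ≤ j → x j = false)).card :=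
        (Finset.card_union_of_disjoint hdisj).symm
  _ ≤ (Finset.univ : Finset (Fin n)).card := Finset.card_le_card (Finset.subset_univ _)
  _ = n := by simp

lemma leadingOnes_opt (n k : ℕ) (h : k ≤ n) : leadingOnes (opt n k) = k := by
  unfold leadingOnes
  rw [show (Finset.univ.filter fun i : Fin n => ∀ j : Fin n, j ≤ i → opt n k j = true)
      = Finset.univ.filter fun i : Fin n => i.val < k by
    apply Finset.filter_congr; intro i _
    simp only [opt, decide_eq_true_eq, eq_iff_iff]
    constructor
    · intro hh; exact hh i le_rfl
    · intro hh j hj; exact lt_of_le_of_lt (Fin.le_def.mp hj) hh]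
  exact card_filter_val_lt n k h

lemma trailingZeros_opt (n k : ℕ) (h : k ≤ n) : trailingZeros (opt n k) = n - k := by
  unfold trailingZeros
  rw [show (Finset.univ.filter fun i : Fin n => ∀ j : Fin n, i ≤ j → opt n k j = false)
      = Finset.univ.filter fun i : Fin n => k ≤ i.val by
    apply Finset.filter_congr; intro i _
    simp only [opt, decide_eq_false_iff_not, not_lt, eq_iff_iff]
    constructor
    · intro hh; exact hh i le_rfl
    · intro hh j hj; exact le_trans hh (Fin.le_def.mp hj)]
  exact card_filter_le_val n k h

lemma LOTZ_opt (n k : ℕ) (h : k ≤ n) : LOTZ (opt n k) = ((k : ℤ), (n : ℤ) - k) := by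
  unfold LOTZ
  rw [leadingOnes_opt n k h, trailingZeros_opt n k h]
  simp [Int.ofNat_sub h]

lemma lotz_pareto_of_sum {n : ℕ} {x : BitString n}
    (h : leadingOnes x + trailingZeros x = n) : paretoOptimal LOTZ x := by
  rintro ⟨y, h1, h2, h3⟩
  have hy := lo_add_tz_le y
  apply h3
  have e1 : (LOTZ x).1 = (LOTZ y).1 := by
    simp only [LOTZ] at h1 h2 ⊢
    omega
  have e2 : (LOTZ x).2 = (LOTZ y).2 := by
    simp only [LOTZ] at h1 h2 ⊢
    omega
  exact Prod.ext e1 e2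

lemma omm_pareto {n : ℕ} (x : BitString n) : paretoOptimal OneMinMax x := by
  rintro ⟨y, h1, h2, h3⟩
  apply h3
  simp only [OneMinMax] at h1 h2 ⊢
  have := onesCount_le x
  have := onesCount_le y
  refine Prod.ext ?_ ?_ <;> simp <;> omega

lemma lotz_sum_of_pareto {n : ℕ} {x : BitString n} (h : paretoOptimal LOTZ x) :
    leadingOnes x + trailingZeros x = n := by
  by_contra hne
  have hlt : leadingOnes x + trailingZeros x < n := lt_of_le_of_ne (lo_add_tz_le x) hne
  apply h
  refine ⟨opt n (n - trailingZeros x), ?_, ?_, ?_⟩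
  · simp only [LOTZ, leadingOnes_opt n _ (Nat.sub_le _ _)]
    exact_mod_cast Nat.le_of_lt (by omega)
  · simp only [LOTZ, trailingZeros_opt n _ (Nat.sub_le _ _)]
    exact_mod_cast le_of_eq (by omega)
  · intro hc
    have := congrArg Prod.fst hc
    simp only [LOTZ, leadingOnes_opt n _ (Nat.sub_le _ _)] at this
    have : leadingOnes x = n - trailingZeros x := by exact_mod_cast this
    omega

lemma pareto_true_of_lt {n : ℕ} {x : BitString n} {j : Fin n}
    (h : j.val < leadingOnes x) : x j = true := by
  by_contra hx
  have hsub : (Finset.univ.filter fun i : Fin n => ∀ j' : Fin n, j' ≤ i → x j' = true)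
      ⊆ Finset.univ.filter fun i : Fin n => i.val < j.val := by
    intro i hi
    simp only [Finset.mem_filter, Finset.mem_univ, true_and] at hi ⊢
    by_contra hlt
    exact hx (hi j (Fin.le_def.mpr (by omega)))
  have := Finset.card_le_card hsub
  rw [card_filter_val_lt n j.val (le_of_lt j.isLt)] at this
  unfold leadingOnes at h
  omega

lemma pareto_false_of_ge {n : ℕ} {x : BitString n} {j : Fin n}
    (h : n - trailingZeros x ≤ j.val) : x j = false := by
  by_contra hx
  have hx' : x j = true := by simpa using hx
  have hsub : (Finset.univ.filter fun i : Fin n => ∀ j' : Fin n, i ≤ j' → x j' = false)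
      ⊆ Finset.univ.filter fun i : Fin n => j.val + 1 ≤ i.val := by
    intro i hi
    simp only [Finset.mem_filter, Finset.mem_univ, true_and] at hi ⊢
    by_contra hlt
    have := hi j (Fin.le_def.mpr (by omega))
    simp [hx'] at this
  have hc := Finset.card_le_card hsub
  rw [card_filter_le_val n (j.val + 1) j.isLt] at hc
  have hc' : trailingZeros x ≤ n - (j.val + 1) := hc
  have := j.isLt
  omega

lemma lotz_pareto_eq_opt {n : ℕ} {x : BitString n} (h : paretoOptimal LOTZ x) :
    x = opt n (leadingOnes x) := by
  have hsum := lotz_sum_of_pareto h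
  funext j
  by_cases hj : j.val < leadingOnes x
  · rw [pareto_true_of_lt hj]; simp [opt, hj]
  · rw [pareto_false_of_ge (x := x) (j := j) (by omega)]
    simp only [opt]
    simpa using hj

lemma flipBit_apply {n : ℕ} (x : BitString n) (p j : Fin n) :
    flipBit x p j = if j = p then !x p else x j := by
  simp [flipBit, Function.update_apply]

lemma flip_opt_up {n k : ℕ} (h : k < n) :
    flipBit (opt n k) ⟨k, h⟩ = opt n (k + 1) := by
  funext j
  rw [flipBit_apply]
  by_cases hj : j = (⟨k, h⟩ : Fin n)
  · subst hj; simp [opt]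
  · have : j.val ≠ k := fun hc => hj (Fin.ext hc)
    simp only [if_neg hj, opt]
    apply decide_eq_decide.mpr
    omega

lemma flip_opt_down {n k : ℕ} (hk : 0 < k) (h : k ≤ n) :
    flipBit (opt n k) ⟨k - 1, by omega⟩ = opt n (k - 1) := by
  funext j
  rw [flipBit_apply]
  by_cases hj : j = (⟨k - 1, by omega⟩ : Fin n)
  · subst hj; simp [opt]; omega
  · have : j.val ≠ k - 1 := fun hc => hj (Fin.ext hc)
    simp only [if_neg hj, opt]
    apply decide_eq_decide.mpr
    omega

lemma lotz_neighbour_classify {n : ℕ} {i k : ℕ} (hi : i ≤ n) (hk : k ≤ n) {p : Fin n}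
    (h : opt n k = flipBit (opt n i) p) : k = i + 1 ∨ (k = i - 1 ∧ 1 ≤ i) := by
  have hne : ∀ j : Fin n, j ≠ p → opt n k j = opt n i j := by
    intro j hj
    rw [h, flipBit_apply, if_neg hj]
  have hp : opt n k p ≠ opt n i p := by
    rw [h, flipBit_apply, if_pos rfl]
    cases (opt n i p) <;> simp
  have hki : k ≠ i := by
    rintro rfl
    exact hp rfl
  have key : ∀ j : Fin n, j.val ≠ p.val → ((j.val < k) ↔ (j.val < i)) := by
    intro j hj
    have := hne j (fun hc => hj (congrArg Fin.val hc))
    simp only [opt] at this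
    exact decide_eq_decide.mp this
  by_cases hlt : k < i
  · right
    refine ⟨?_, by omega⟩
    by_contra hne2
    have hik : k + 2 ≤ i := by omega
    have h1 : k < n := by omega
    have h2 : k + 1 < n := by omega
    have e1 := key ⟨k, h1⟩
    have e2 := key ⟨k + 1, h2⟩
    simp at e1 e2
    by_cases hc1 : k = p.val
    · have := e2 (by omega); omega
    · have := e1 hc1; omega
  · left
    by_contra hne2
    have hik : i + 2 ≤ k := by omega
    have h1 : i < n := by omega
    have h2 : i + 1 < n := by omega
    have e1 := key ⟨i, h1⟩
    have e2 := key ⟨i + 1, h2⟩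
    simp at e1 e2
    by_cases hc1 : i = p.val
    · have := e2 (by omega); omega
    · have := e1 hc1; omega

lemma sum_le {n : ℕ} {f : BitString n → ℤ × ℤ} (hf : f = OneMinMax ∨ f = LOTZ)
    (z : BitString n) : (f z).1 + (f z).2 ≤ (n : ℤ) := by
  rcases hf with rfl | rfl
  · simp [OneMinMax]
  · simp only [LOTZ]
    have := lo_add_tz_le z
    exact_mod_cast Nat.cast_le.mpr this

lemma fst_nonneg {n : ℕ} {f : BitString n → ℤ × ℤ} (hf : f = OneMinMax ∨ f = LOTZ)
    (z : BitString n) : 0 ≤ (f z).1 := by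
  rcases hf with rfl | rfl <;> simp [OneMinMax, LOTZ]

lemma snd_nonneg {n : ℕ} {f : BitString n → ℤ × ℤ} (hf : f = OneMinMax ∨ f = LOTZ)
    (z : BitString n) : 0 ≤ (f z).2 := by
  rcases hf with rfl | rfl
  · simp [OneMinMax]
    exact_mod_cast Nat.cast_le.mpr (onesCount_le z)
  · simp [LOTZ]

lemma pareto_sum {n : ℕ} {f : BitString n → ℤ × ℤ} (hf : f = OneMinMax ∨ f = LOTZ)
    {x : BitString n} (hx : paretoOptimal f x) : (f x).1 + (f x).2 = (n : ℤ) := by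
  rcases hf with rfl | rfl
  · simp [OneMinMax]
  · simp only [LOTZ]
    have := lotz_sum_of_pareto hx
    exact_mod_cast congrArg (Nat.cast : ℕ → ℤ) this

lemma key {n : ℕ} {f : BitString n → ℤ × ℤ} (hf : f = OneMinMax ∨ f = LOTZ)
    {x : BitString n} (hxo : paretoOptimal f x) (hx0 : x ≠ allZeros n) (hx1 : x ≠ allOnes n) :
    1 ≤ (f x).1 ∧ (f x).1 + 1 ≤ (n : ℤ) ∧
    (∃ y, hammingNeighbour x y ∧ paretoOptimal f y ∧
      f y = ((f x).1 - 1, (n : ℤ) - (f x).1 + 1)) ∧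
    (∃ y, hammingNeighbour x y ∧ paretoOptimal f y ∧
      f y = ((f x).1 + 1, (n : ℤ) - (f x).1 - 1)) ∧
    (∀ y, hammingNeighbour x y → paretoOptimal f y →
      f y = ((f x).1 - 1, (n : ℤ) - (f x).1 + 1) ∨
      f y = ((f x).1 + 1, (n : ℤ) - (f x).1 - 1)) := by
  rcases hf with rfl | rfl
  · -- OneMinMax
    obtain ⟨j1, hj1⟩ : ∃ j, x j = true := by
      by_contra hc
      push_neg at hc
      exact hx0 (funext fun j => by simpa [allZeros] using hc j)
    obtain ⟨j0, hj0⟩ : ∃ j, x j = false := by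
      by_contra hc
      push_neg at hc
      exact hx1 (funext fun j => by simpa [allOnes] using (hc j))
    have hc1 : 1 ≤ onesCount x := Finset.card_pos.mpr ⟨j1, by simp [hj1]⟩
    have hcn : onesCount x + 1 ≤ n := by
      have h1 := onesCount_le (flipBit x j0)
      have h2 := onesCount_flip x j0
      rw [if_neg (by simp [hj0])] at h2
      omega
    have hfst : (OneMinMax x).1 = (onesCount x : ℤ) := rfl
    refine ⟨by rw [hfst]; exact_mod_cast hc1, by rw [hfst]; exact_mod_cast hcn, ?_, ?_, ?_⟩
    · refine ⟨flipBit x j1, ⟨j1, rfl⟩, omm_pareto _, ?_⟩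
      have hflip := onesCount_flip x j1
      rw [if_pos hj1] at hflip
      simp only [OneMinMax, hflip, Prod.mk.injEq]
      exact ⟨by trivial, by ring⟩
    · refine ⟨flipBit x j0, ⟨j0, rfl⟩, omm_pareto _, ?_⟩
      have hflip := onesCount_flip x j0
      rw [if_neg (by simp [hj0])] at hflip
      simp only [OneMinMax, hflip, Prod.mk.injEq]
      exact ⟨by trivial, by ring⟩
    · rintro y ⟨p, rfl⟩ -
      have hflip := onesCount_flip x p
      by_cases hp : x p = true
      · left
        rw [if_pos hp] at hflip
        simp only [OneMinMax, hflip, Prod.mk.injEq]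
        exact ⟨by trivial, by ring⟩
      · right
        rw [if_neg hp] at hflip
        simp only [OneMinMax, hflip, Prod.mk.injEq]
        exact ⟨by trivial, by ring⟩
  · -- LOTZ
    obtain ⟨i, hidef⟩ : ∃ i, leadingOnes x = i := ⟨_, rfl⟩
    have hsum := lotz_sum_of_pareto hxo
    rw [hidef] at hsum
    have hin : i ≤ n := by omega
    have hxopt := lotz_pareto_eq_opt hxo
    rw [hidef] at hxopt
    subst hxopt
    have hi1 : 1 ≤ i := by
      rcases Nat.eq_zero_or_pos i with h0 | h; swap; · exact h
      exfalso; apply hx0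
      rw [h0]
      funext j; simp [opt, allZeros]
    have hin' : i + 1 ≤ n := by
      rcases lt_or_eq_of_le hin with h | h
      · omega
      · exfalso; apply hx1
        rw [h]
        funext j; simp [opt, allOnes, j.isLt]
    have hfx : LOTZ (opt n i) = ((i : ℤ), (n : ℤ) - i) := LOTZ_opt n i hin
    refine ⟨?_, ?_, ?_, ?_, ?_⟩
    · rw [hfx]; simpa using (by exact_mod_cast hi1 : (1:ℤ) ≤ (i:ℤ))
    · rw [hfx]; simpa using (by exact_mod_cast hin' : (i:ℤ) + 1 ≤ (n:ℤ))
    · refine ⟨opt n (i - 1), ⟨⟨i - 1, by omega⟩, (flip_opt_down hi1 hin).symm⟩, ?_, ?_⟩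
      · exact lotz_pareto_of_sum (by
          rw [leadingOnes_opt n _ (by omega), trailingZeros_opt n _ (by omega)]; omega)
      · rw [hfx, LOTZ_opt n _ (by omega)]
        simp only [Prod.mk.injEq]
        constructor <;> push_cast [Nat.cast_sub hi1] <;> ring
    · refine ⟨opt n (i + 1), ⟨⟨i, by omega⟩, (flip_opt_up (by omega)).symm⟩, ?_, ?_⟩
      · exact lotz_pareto_of_sum (by
          rw [leadingOnes_opt n _ (by omega), trailingZeros_opt n _ (by omega)]; omega)
      · rw [hfx, LOTZ_opt n _ (by omega)]
        simp only [Prod.mk.injEq]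
        constructor <;> push_cast <;> ring
    · rintro y hnb hyo
      obtain ⟨p, hyp⟩ := hnb
      have hysum := lotz_sum_of_pareto hyo
      have hyopt := lotz_pareto_eq_opt hyo
      obtain ⟨k, hkdef⟩ : ∃ k, leadingOnes y = k := ⟨_, rfl⟩
      rw [hkdef] at hyopt hysum
      subst hyopt
      have hkn : k ≤ n := by omega
      rcases lotz_neighbour_classify hin hkn hyp with h | ⟨h, _⟩
      · right
        rw [hfx, LOTZ_opt n k hkn]
        simp only [Prod.mk.injEq]
        constructor <;> push_cast <;> omega
      · left
        rw [hfx, LOTZ_opt n k hkn]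
        simp only [Prod.mk.injEq]
        constructor <;> push_cast <;> omega

lemma unbot'_le {s : Finset ℤ} {r m : ℤ} (hr : r ≤ m) (h : ∀ a ∈ s, a ≤ m) :
    WithBot.unbotD r s.max ≤ m := by
  match hs : s.max with
  | ⊥ => simpa using hr
  | (a : ℤ) =>
    have := Finset.mem_of_max hs
    simpa using h a this

lemma unbot'_eq {s : Finset ℤ} {r m : ℤ} (hm : m ∈ s) (h : ∀ a ∈ s, a ≤ m) :
    WithBot.unbotD r s.max = m := by
  have h1 : s.max ≤ (m : WithBot ℤ) := Finset.max_le fun a ha => WithBot.coe_le_coe.mpr (h a ha)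
  have h2 : (m : WithBot ℤ) ≤ s.max := Finset.le_max hm
  rw [le_antisymm h1 h2]
  rfl

/-- The two HVC factor bound lemmas, then bad/good HVC values. -/
lemma hvc_factors {n : ℕ} {f : BitString n → ℤ × ℤ} (hf : f = OneMinMax ∨ f = LOTZ)
    {r : ℤ × ℤ} (hr1 : r.1 ≤ -1) (hr2 : r.2 ≤ -1)
    {P : Finset (BitString n)} (hP : mutuallyNonDominated f P)
    {x : BitString n} (hx : x ∈ P) (hxo : paretoOptimal f x)
    (hx0 : x ≠ allZeros n) (hx1 : x ≠ allOnes n) :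
    (isBad f P x → HVC f r x P = 1) ∧ (isGood f P x → 1 < HVC f r x P) := by
  obtain ⟨hi1, hin, ⟨yd, hydn, hydo, hydf⟩, ⟨yu, hyun, hyuo, hyuf⟩, hclass⟩ :=
    key hf hxo hx0 hx1
  have hsumx := pareto_sum hf hxo
  set i : ℤ := (f x).1 with hidef
  have hfx2 : (f x).2 = (n : ℤ) - i := by omega
  -- bounds on the two "previous point" values
  set A : Finset ℤ := (P.filter fun z => (f z).1 < (f x).1).image fun z => (f z).1 with hA
  set B : Finset ℤ := (P.filter fun z => (f z).2 < (f x).2).image fun z => (f z).2 with hB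
  have hAle : ∀ a ∈ A, a ≤ i - 1 := by
    intro a ha
    obtain ⟨z, hz, rfl⟩ := Finset.mem_image.mp ha
    have := (Finset.mem_filter.mp hz).2
    omega
  have hBle : ∀ b ∈ B, b ≤ (n : ℤ) - i - 1 := by
    intro b hb
    obtain ⟨z, hz, rfl⟩ := Finset.mem_image.mp hb
    have := (Finset.mem_filter.mp hz).2
    rw [hfx2] at this
    omega
  have hvc_eq : HVC f r x P = (i - WithBot.unbotD r.1 A.max) * (((n : ℤ) - i) - WithBot.unbotD r.2 B.max) := by
    rw [HVC, ← hA, ← hB, ← hidef, hfx2]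
  -- attained-value lemmas
  have hAeq : (∃ z ∈ P, f z = (i - 1, (n : ℤ) - i + 1)) → WithBot.unbotD r.1 A.max = i - 1 := by
    rintro ⟨z, hz, hfz⟩
    apply unbot'_eq ?_ hAle
    apply Finset.mem_image.mpr
    exact ⟨z, Finset.mem_filter.mpr ⟨hz, by rw [hfz]; simp; exact le_rfl⟩, by rw [hfz]⟩
  have hBeq : (∃ z ∈ P, f z = (i + 1, (n : ℤ) - i - 1)) → WithBot.unbotD r.2 B.max = (n : ℤ) - i - 1 := by
    rintro ⟨z, hz, hfz⟩
    apply unbot'_eq ?_ hBle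
    apply Finset.mem_image.mpr
    exact ⟨z, Finset.mem_filter.mpr ⟨hz, by rw [hfz, hfx2]; simp⟩, by rw [hfz]⟩
  -- unattained-value lemmas
  have hAlt : (¬ ∃ z ∈ P, f z = (i - 1, (n : ℤ) - i + 1)) → WithBot.unbotD r.1 A.max ≤ i - 2 := by
    intro hne
    apply unbot'_le (by omega)
    intro a ha
    obtain ⟨z, hz, rfl⟩ := Finset.mem_image.mp ha
    obtain ⟨hzP, hzlt⟩ := Finset.mem_filter.mp hz
    by_contra hgt
    have hz1 : (f z).1 = i - 1 := by omega
    have hnd := hP z hzP x hx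
    rw [dominates] at hnd
    push_neg at hnd
    have hzsum := sum_le hf z
    have hfzne : f z ≠ f x := fun hc => by rw [hc] at hz1; omega
    have h2 := hnd (by omega)
    rcases lt_or_ge (f x).2 (f z).2 with hlt2 | hle2
    · have hz2 : (f z).2 = (n : ℤ) - i + 1 := by omega
      exact hne ⟨z, hzP, Prod.ext hz1 hz2⟩
    · exact hfzne (h2 hle2)
  have hBlt : (¬ ∃ z ∈ P, f z = (i + 1, (n : ℤ) - i - 1)) → WithBot.unbotD r.2 B.max ≤ (n : ℤ) - i - 2 := by
    intro hne
    apply unbot'_le (by omega)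
    intro b hb
    obtain ⟨z, hz, rfl⟩ := Finset.mem_image.mp hb
    obtain ⟨hzP, hzlt⟩ := Finset.mem_filter.mp hz
    rw [hfx2] at hzlt
    by_contra hgt
    have hz2 : (f z).2 = (n : ℤ) - i - 1 := by omega
    have hnd := hP z hzP x hx
    rw [dominates] at hnd
    push_neg at hnd
    have hzsum := sum_le hf z
    have hfzne : f z ≠ f x := fun hc => by rw [hc] at hz2; omega
    rcases lt_or_ge (f x).1 (f z).1 with hlt1 | hle1
    · have hz1 : (f z).1 = i + 1 := by omega
      exact hne ⟨z, hzP, Prod.ext hz1 hz2⟩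
    · exact hfzne (hnd hle1 (by omega))
  constructor
  · -- bad
    rintro ⟨-, hbad⟩
    push_neg at hbad
    obtain ⟨zd, hzd, hfzd⟩ := hbad yd hydn hydo
    obtain ⟨zu, hzu, hfzu⟩ := hbad yu hyun hyuo
    rw [hydf] at hfzd
    rw [hyuf] at hfzu
    rw [hvc_eq, hAeq ⟨zd, hzd, hfzd⟩, hBeq ⟨zu, hzu, hfzu⟩]
    ring
  · -- good
    rintro ⟨-, w, hwn, hwo, hwun⟩
    rcases hclass w hwn hwo with hw | hw
    · have hne : ¬ ∃ z ∈ P, f z = (i - 1, (n : ℤ) - i + 1) := by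
        rintro ⟨z, hz, hfz⟩
        exact hwun z hz (by rw [hfz, hw])
      have h1 := hAlt hne
      have h2 : WithBot.unbotD r.2 B.max ≤ (n : ℤ) - i - 1 := unbot'_le (by omega) hBle
      rw [hvc_eq]
      nlinarith
    · have hne : ¬ ∃ z ∈ P, f z = (i + 1, (n : ℤ) - i - 1) := by
        rintro ⟨z, hz, hfz⟩
        exact hwun z hz (by rw [hfz, hw])
      have h1 := hBlt hne
      have h2 : WithBot.unbotD r.1 A.max ≤ i - 1 := unbot'_le (by omega) hAle
      rw [hvc_eq]
      nlinarith

/-- For OneMinMax and LOTZ, with any reference point dominated by `(-1,-1)`,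
the hypervolume contribution is diversity-favouring on `{0,1}ⁿ \ {0ⁿ, 1ⁿ}`:
bad non-extreme points have HVC exactly 1, good non-extreme points have HVC > 1. -/
theorem hvc_diversity_favouring (n : ℕ) (f : BitString n → ℤ × ℤ)
    (hf : f = OneMinMax ∨ f = LOTZ) (r : ℤ × ℤ) (hr1 : r.1 ≤ -1) (hr2 : r.2 ≤ -1)
    (P : Finset (BitString n)) (hP : mutuallyNonDominated f P)
    (x y : BitString n) (hx : x ∈ P) (hy : y ∈ P)
    (hxo : paretoOptimal f x) (hyo : paretoOptimal f y)
    (hx0 : x ≠ allZeros n) (hx1 : x ≠ allOnes n)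
    (hy0 : y ≠ allZeros n) (hy1 : y ≠ allOnes n) :
    (isBad f P x → HVC f r x P = 1) ∧
    (isGood f P y → 1 < HVC f r y P) ∧
    (isBad f P x → isGood f P y → HVC f r x P < HVC f r y P) := by
  refine ⟨fun hb => (hvc_factors hf hr1 hr2 hP hx hxo hx0 hx1).1 hb,
    fun hg => (hvc_factors hf hr1 hr2 hP hy hyo hy0 hy1).2 hg,
    fun hb hg => ?_⟩
  rw [(hvc_factors hf hr1 hr2 hP hx hxo hx0 hx1).1 hb]
  exact (hvc_factors hf hr1 hr2 hP hy hyo hy0 hy1).2 hg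


end EMO
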